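/- Let Ω = {ω_1, …, ω_12} and let 𝓘 = { {ω_1, ω_2, ω_3, ω_4}, {ω_4, ω_5, ω_6, ω_7}, {ω_7, ω_8, ω_9, ω_10}, {ω_10, ω_11, ω_12, ω_1}, {ω_2, ω_5, ω_8, ω_11} }. If P is a partition of Ω into exactly 4 nonempty blocks satisfying the 𝒥-minimal compatibility condition with respect to 𝓘, and the set {ω_2, ω_5, ω_8, ω_11} is contained in a single block of P, then P is one of the three partitions: {{ω_2, ω_5, ω_8, ω_11}, {ω_1, ω_6, ω_9}, {ω_3, ω_7, ω_12}, {ω_4, ω_10}}; {{ω_2, ω_5, ω_8, ω_11}, {ω_1, ω_7}, {ω_3, ω_6, ω_10}, {ω_4, ω_9, ω_12}}; {{ω_2, ω_5, ω_8, ω_11}, {ω_1, ω_7}, {ω_3, ω_6, ω_9, ω_12}, {ω_4, ω_10}}. -/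
import Mathlib


/-- `P` is a partition of `Ω` into exactly `r` nonempty pairwise disjoint blocks
whose union is `Ω`. -/
def isPartitionInto {Ω : Type*} [Fintype Ω] [DecidableEq Ω]
    (P : Finset (Finset Ω)) (r : ℕ) : Prop :=
  P.card = r ∧ (∀ B ∈ P, B.Nonempty) ∧
    (∀ B ∈ P, ∀ C ∈ P, B ≠ C → Disjoint B C) ∧ P.biUnion id = Finset.univ

/-- The 𝒥-minimal compatibility condition: every member `S` of `I` is either contained
in a single block of `P`, or its elements lie in pairwise distinct blocks of `P`. -/
def JCompat {Ω : Type*} [DecidableEq Ω] (P : Finset (Finset Ω))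
    (I : Finset (Finset Ω)) : Prop :=
  ∀ S ∈ I, (∃ B ∈ P, S ⊆ B) ∨
    (∀ x ∈ S, ∀ y ∈ S, ∀ B ∈ P, x ∈ B → y ∈ B → x = y)

/-- The collection 𝓘 of `4`-element subsets of `Fin 12`, where `ω_i` corresponds to
`i - 1 : Fin 12`. -/
def I12 : Finset (Finset (Fin 12)) :=
  {{0,1,2,3},{3,4,5,6},{6,7,8,9},{9,10,11,0},{1,4,7,10}}

theorem stmt8 (P : Finset (Finset (Fin 12)))
    (hP : isPartitionInto P 4) (hcompat : JCompat P I12)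
    (hblock : ∃ B ∈ P, ({1,4,7,10} : Finset (Fin 12)) ⊆ B) :
    P = {{1,4,7,10},{0,5,8},{2,6,11},{3,9}} ∨
    P = {{1,4,7,10},{0,6},{2,5,9},{3,8,11}} ∨
    P = {{1,4,7,10},{0,6},{2,5,8,11},{3,9}} := by
  obtain ⟨hcard, hne, hdisj, hcov⟩ := hP
  obtain ⟨B, hB, hBsub⟩ := hblock
  have huniq : ∀ C ∈ P, ∀ D ∈ P, ∀ x : Fin 12, x ∈ C → x ∈ D → C = D := by
    intro C hC D hD x hxC hxD
    by_contra h
    exact Finset.disjoint_left.mp (hdisj C hC D hD h) hxC hxD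
  have h1B : (1 : Fin 12) ∈ B := hBsub (by decide)
  have h4B : (4 : Fin 12) ∈ B := hBsub (by decide)
  have h7B : (7 : Fin 12) ∈ B := hBsub (by decide)
  have h10B : (10 : Fin 12) ∈ B := hBsub (by decide)
  have pull : ∀ S ∈ I12, ∀ x ∈ S, ∀ y ∈ S, x ≠ y → x ∈ B → y ∈ B → S ⊆ B := by
    intro S hS x hx y hy hxy hxB hyB
    rcases hcompat S hS with ⟨C, hC, hSC⟩ | h
    · rwa [huniq C hC B hB x (hSC hx) hxB] at hSC
    · exact absurd (h x hx y hy B hB hxB hyB) hxy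
  have chain12 : ({0,1,2,3} : Finset (Fin 12)) ⊆ B → ({3,4,5,6} : Finset (Fin 12)) ⊆ B :=
    fun h => pull _ (by decide) 3 (by decide) 4 (by decide) (by decide) (h (by decide)) h4B
  have chain23 : ({3,4,5,6} : Finset (Fin 12)) ⊆ B → ({6,7,8,9} : Finset (Fin 12)) ⊆ B :=
    fun h => pull _ (by decide) 6 (by decide) 7 (by decide) (by decide) (h (by decide)) h7B
  have chain34 : ({6,7,8,9} : Finset (Fin 12)) ⊆ B → ({9,10,11,0} : Finset (Fin 12)) ⊆ B :=
    fun h => pull _ (by decide) 9 (by decide) 10 (by decide) (by decide) (h (by decide)) h10B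
  have chain41 : ({9,10,11,0} : Finset (Fin 12)) ⊆ B → ({0,1,2,3} : Finset (Fin 12)) ⊆ B :=
    fun h => pull _ (by decide) 0 (by decide) 1 (by decide) (by decide) (h (by decide)) h1B
  have final : ({0,1,2,3} : Finset (Fin 12)) ⊆ B → ({3,4,5,6} : Finset (Fin 12)) ⊆ B → ({6,7,8,9} : Finset (Fin 12)) ⊆ B → ({9,10,11,0} : Finset (Fin 12)) ⊆ B → False := by
    intro A1 A2 A3 A4
    obtain ⟨C, hC, hCB⟩ := Finset.exists_mem_ne (by rw [hcard]; norm_num) B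
    obtain ⟨c, hc⟩ := hne C hC
    have hcB : c ∈ B := by
      fin_cases c <;>
        first
          | exact A1 (by decide)
          | exact A2 (by decide)
          | exact A3 (by decide)
          | exact A4 (by decide)
    exact Finset.disjoint_left.mp (hdisj C hC B hB hCB) hc hcB
  have habs : ∀ x : Fin 12, x ∈ B → x ∈ ({1,4,7,10} : Finset (Fin 12)) := by
    by_contra hcon
    push_neg at hcon
    obtain ⟨x, hxB, hx4⟩ := hcon
    fin_cases x
    · have A1 := pull ({0,1,2,3} : Finset (Fin 12)) (by decide) 0 (by decide) 1 (by decide) (by decide) hxB h1B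
      have A2 := chain12 A1
      have A3 := chain23 A2
      have A4 := chain34 A3
      exact final A1 A2 A3 A4
    · exact absurd (by decide) hx4
    · have A1 := pull ({0,1,2,3} : Finset (Fin 12)) (by decide) 2 (by decide) 1 (by decide) (by decide) hxB h1B
      have A2 := chain12 A1
      have A3 := chain23 A2
      have A4 := chain34 A3
      exact final A1 A2 A3 A4
    · have A1 := pull ({0,1,2,3} : Finset (Fin 12)) (by decide) 3 (by decide) 1 (by decide) (by decide) hxB h1B
      have A2 := chain12 A1
      have A3 := chain23 A2
      have A4 := chain34 A3
      exact final A1 A2 A3 A4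
    · exact absurd (by decide) hx4
    · have A2 := pull ({3,4,5,6} : Finset (Fin 12)) (by decide) 5 (by decide) 4 (by decide) (by decide) hxB h4B
      have A3 := chain23 A2
      have A4 := chain34 A3
      have A1 := chain41 A4
      exact final A1 A2 A3 A4
    · have A2 := pull ({3,4,5,6} : Finset (Fin 12)) (by decide) 6 (by decide) 4 (by decide) (by decide) hxB h4B
      have A3 := chain23 A2
      have A4 := chain34 A3
      have A1 := chain41 A4
      exact final A1 A2 A3 A4
    · exact absurd (by decide) hx4
    · have A3 := pull ({6,7,8,9} : Finset (Fin 12)) (by decide) 8 (by decide) 7 (by decide) (by decide) hxB h7B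
      have A4 := chain34 A3
      have A1 := chain41 A4
      have A2 := chain12 A1
      exact final A1 A2 A3 A4
    · have A3 := pull ({6,7,8,9} : Finset (Fin 12)) (by decide) 9 (by decide) 7 (by decide) (by decide) hxB h7B
      have A4 := chain34 A3
      have A1 := chain41 A4
      have A2 := chain12 A1
      exact final A1 A2 A3 A4
    · exact absurd (by decide) hx4
    · have A4 := pull ({9,10,11,0} : Finset (Fin 12)) (by decide) 11 (by decide) 10 (by decide) (by decide) hxB h10B
      have A1 := chain41 A4
      have A2 := chain12 A1
      have A3 := chain23 A2
      exact final A1 A2 A3 A4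
  have hxnB : ∀ x : Fin 12, x ∉ ({1,4,7,10} : Finset (Fin 12)) → x ∉ B :=
    fun x h hx => h (habs x hx)
  have hBeq : B = ({1,4,7,10} : Finset (Fin 12)) :=
    Finset.Subset.antisymm (fun x hx => habs x hx) hBsub
  have r1 : ∀ x ∈ ({0,1,2,3} : Finset (Fin 12)), ∀ y ∈ ({0,1,2,3} : Finset (Fin 12)), ∀ C ∈ P, x ∈ C → y ∈ C → x = y := by
    intro x hx y hy C hC hxC hyC
    rcases hcompat _ (show ({0,1,2,3} : Finset (Fin 12)) ∈ I12 from by decide) with ⟨D, hD, hSD⟩ | h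
    · exact absurd ((huniq D hD B hB 1 (hSD (by decide)) h1B) ▸ hSD (by decide) : (0 : Fin 12) ∈ B)
        (hxnB 0 (by decide))
    · exact h x hx y hy C hC hxC hyC
  have r2 : ∀ x ∈ ({3,4,5,6} : Finset (Fin 12)), ∀ y ∈ ({3,4,5,6} : Finset (Fin 12)), ∀ C ∈ P, x ∈ C → y ∈ C → x = y := by
    intro x hx y hy C hC hxC hyC
    rcases hcompat _ (show ({3,4,5,6} : Finset (Fin 12)) ∈ I12 from by decide) with ⟨D, hD, hSD⟩ | h
    · exact absurd ((huniq D hD B hB 4 (hSD (by decide)) h4B) ▸ hSD (by decide) : (3 : Fin 12) ∈ B)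
        (hxnB 3 (by decide))
    · exact h x hx y hy C hC hxC hyC
  have r3 : ∀ x ∈ ({6,7,8,9} : Finset (Fin 12)), ∀ y ∈ ({6,7,8,9} : Finset (Fin 12)), ∀ C ∈ P, x ∈ C → y ∈ C → x = y := by
    intro x hx y hy C hC hxC hyC
    rcases hcompat _ (show ({6,7,8,9} : Finset (Fin 12)) ∈ I12 from by decide) with ⟨D, hD, hSD⟩ | h
    · exact absurd ((huniq D hD B hB 7 (hSD (by decide)) h7B) ▸ hSD (by decide) : (6 : Fin 12) ∈ B)
        (hxnB 6 (by decide))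
    · exact h x hx y hy C hC hxC hyC
  have r4 : ∀ x ∈ ({9,10,11,0} : Finset (Fin 12)), ∀ y ∈ ({9,10,11,0} : Finset (Fin 12)), ∀ C ∈ P, x ∈ C → y ∈ C → x = y := by
    intro x hx y hy C hC hxC hyC
    rcases hcompat _ (show ({9,10,11,0} : Finset (Fin 12)) ∈ I12 from by decide) with ⟨D, hD, hSD⟩ | h
    · exact absurd ((huniq D hD B hB 10 (hSD (by decide)) h10B) ▸ hSD (by decide) : (9 : Fin 12) ∈ B)
        (hxnB 9 (by decide))
    · exact h x hx y hy C hC hxC hyC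
  have hcover : ∀ x : Fin 12, ∃ C ∈ P, x ∈ C := by
    intro x
    have hx : x ∈ P.biUnion id := by rw [hcov]; exact Finset.mem_univ x
    obtain ⟨C, hC, hxC⟩ := Finset.mem_biUnion.mp hx
    exact ⟨C, hC, hxC⟩
  obtain ⟨C0, hC0, m0⟩ := hcover 0
  obtain ⟨C2, hC2, m2⟩ := hcover 2
  obtain ⟨C3, hC3, m3⟩ := hcover 3
  obtain ⟨D5, hD5, m5⟩ := hcover 5
  obtain ⟨D6, hD6, m6⟩ := hcover 6
  obtain ⟨D8, hD8, m8⟩ := hcover 8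
  obtain ⟨D9, hD9, m9⟩ := hcover 9
  obtain ⟨D11, hD11, m11⟩ := hcover 11
  have nC0B : C0 ≠ B := fun h => hxnB 0 (by decide) (h ▸ m0)
  have nC2B : C2 ≠ B := fun h => hxnB 2 (by decide) (h ▸ m2)
  have nC3B : C3 ≠ B := fun h => hxnB 3 (by decide) (h ▸ m3)
  have n02 : C0 ≠ C2 := fun h => absurd (r1 0 (by decide) 2 (by decide) C2 hC2 (h ▸ m0) m2) (by decide)
  have n03 : C0 ≠ C3 := fun h => absurd (r1 0 (by decide) 3 (by decide) C3 hC3 (h ▸ m0) m3) (by decide)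
  have n23 : C2 ≠ C3 := fun h => absurd (r1 2 (by decide) 3 (by decide) C3 hC3 (h ▸ m2) m3) (by decide)
  have hsub : ({B, C0, C2, C3} : Finset (Finset (Fin 12))) ⊆ P := by
    intro x hx
    simp only [Finset.mem_insert, Finset.mem_singleton] at hx
    rcases hx with h | h | h | h <;> subst h <;> assumption
  have hc4 : ({B, C0, C2, C3} : Finset (Finset (Fin 12))).card = 4 := by
    rw [Finset.card_insert_of_notMem (by
          simp only [Finset.mem_insert, Finset.mem_singleton]
          push_neg
          exact ⟨Ne.symm nC0B, Ne.symm nC2B, Ne.symm nC3B⟩),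
        Finset.card_insert_of_notMem (by
          simp only [Finset.mem_insert, Finset.mem_singleton]
          push_neg
          exact ⟨n02, n03⟩),
        Finset.card_insert_of_notMem (by
          simp only [Finset.mem_singleton]
          exact n23),
        Finset.card_singleton]
  have hPeq : P = ({B, C0, C2, C3} : Finset (Finset (Fin 12))) :=
    (Finset.eq_of_subset_of_card_le hsub (by rw [hcard, hc4])).symm
  have hmem4 : ∀ C ∈ P, C = B ∨ C = C0 ∨ C = C2 ∨ C = C3 := by
    intro C hC
    rw [hPeq] at hC
    simpa using hC
  have nD5B : D5 ≠ B := fun h => hxnB 5 (by decide) (h ▸ m5)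
  have nD5C3 : D5 ≠ C3 := fun h =>
    absurd (r2 3 (by decide) 5 (by decide) C3 hC3 m3 (h ▸ m5)) (by decide)
  have hD5cases : D5 = C0 ∨ D5 = C2 := by
    rcases hmem4 D5 hD5 with h | h | h | h
    · exact absurd h nD5B
    · exact Or.inl h
    · exact Or.inr h
    · exact absurd h nD5C3
  rcases hD5cases with h5 | h5
  · have m5' : (5 : Fin 12) ∈ C0 := h5 ▸ m5
    have nD6B : D6 ≠ B := fun h => hxnB 6 (by decide) (h ▸ m6)
    have nD6C0 : D6 ≠ C0 := fun h =>
      absurd (r2 5 (by decide) 6 (by decide) C0 hC0 m5' (h ▸ m6)) (by decide)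
    have nD6C3 : D6 ≠ C3 := fun h =>
      absurd (r2 3 (by decide) 6 (by decide) C3 hC3 m3 (h ▸ m6)) (by decide)
    have hD6 : D6 = C2 := by
      rcases hmem4 D6 hD6 with h | h | h | h
      · exact absurd h nD6B
      · exact absurd h nD6C0
      · exact h
      · exact absurd h nD6C3
    have m6' : (6 : Fin 12) ∈ C2 := hD6 ▸ m6
    have nD9B : D9 ≠ B := fun h => hxnB 9 (by decide) (h ▸ m9)
    have nD9C0 : D9 ≠ C0 := fun h =>
      absurd (r4 0 (by decide) 9 (by decide) C0 hC0 m0 (h ▸ m9)) (by decide)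
    have nD9C2 : D9 ≠ C2 := fun h =>
      absurd (r3 6 (by decide) 9 (by decide) C2 hC2 m6' (h ▸ m9)) (by decide)
    have hD9 : D9 = C3 := by
      rcases hmem4 D9 hD9 with h | h | h | h
      · exact absurd h nD9B
      · exact absurd h nD9C0
      · exact absurd h nD9C2
      · exact h
    have m9' : (9 : Fin 12) ∈ C3 := hD9 ▸ m9
    have nD8B : D8 ≠ B := fun h => hxnB 8 (by decide) (h ▸ m8)
    have nD8C2 : D8 ≠ C2 := fun h =>
      absurd (r3 6 (by decide) 8 (by decide) C2 hC2 m6' (h ▸ m8)) (by decide)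
    have nD8C3 : D8 ≠ C3 := fun h =>
      absurd (r3 9 (by decide) 8 (by decide) C3 hC3 m9' (h ▸ m8)) (by decide)
    have hD8 : D8 = C0 := by
      rcases hmem4 D8 hD8 with h | h | h | h
      · exact absurd h nD8B
      · exact h
      · exact absurd h nD8C2
      · exact absurd h nD8C3
    have m8' : (8 : Fin 12) ∈ C0 := hD8 ▸ m8
    have nD11B : D11 ≠ B := fun h => hxnB 11 (by decide) (h ▸ m11)
    have nD11C0 : D11 ≠ C0 := fun h =>
      absurd (r4 0 (by decide) 11 (by decide) C0 hC0 m0 (h ▸ m11)) (by decide)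
    have nD11C3 : D11 ≠ C3 := fun h =>
      absurd (r4 9 (by decide) 11 (by decide) C3 hC3 m9' (h ▸ m11)) (by decide)
    have hD11 : D11 = C2 := by
      rcases hmem4 D11 hD11 with h | h | h | h
      · exact absurd h nD11B
      · exact absurd h nD11C0
      · exact h
      · exact absurd h nD11C3
    have m11' : (11 : Fin 12) ∈ C2 := hD11 ▸ m11
    have e0 : C0 = ({0,5,8} : Finset (Fin 12)) := by
      ext x
      fin_cases x
      · exact iff_of_true m0 (by decide)
      · exact iff_of_false (fun h => (nC0B) (huniq C0 hC0 B hB 1 h h1B)) (by decide)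
      · exact iff_of_false (fun h => (n02) (huniq C0 hC0 C2 hC2 2 h m2)) (by decide)
      · exact iff_of_false (fun h => (n03) (huniq C0 hC0 C3 hC3 3 h m3)) (by decide)
      · exact iff_of_false (fun h => (nC0B) (huniq C0 hC0 B hB 4 h h4B)) (by decide)
      · exact iff_of_true m5' (by decide)
      · exact iff_of_false (fun h => (n02) (huniq C0 hC0 C2 hC2 6 h m6')) (by decide)
      · exact iff_of_false (fun h => (nC0B) (huniq C0 hC0 B hB 7 h h7B)) (by decide)
      · exact iff_of_true m8' (by decide)
      · exact iff_of_false (fun h => (n03) (huniq C0 hC0 C3 hC3 9 h m9')) (by decide)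
      · exact iff_of_false (fun h => (nC0B) (huniq C0 hC0 B hB 10 h h10B)) (by decide)
      · exact iff_of_false (fun h => (n02) (huniq C0 hC0 C2 hC2 11 h m11')) (by decide)
    have e2 : C2 = ({2,6,11} : Finset (Fin 12)) := by
      ext x
      fin_cases x
      · exact iff_of_false (fun h => (Ne.symm n02) (huniq C2 hC2 C0 hC0 0 h m0)) (by decide)
      · exact iff_of_false (fun h => (nC2B) (huniq C2 hC2 B hB 1 h h1B)) (by decide)
      · exact iff_of_true m2 (by decide)
      · exact iff_of_false (fun h => (n23) (huniq C2 hC2 C3 hC3 3 h m3)) (by decide)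
      · exact iff_of_false (fun h => (nC2B) (huniq C2 hC2 B hB 4 h h4B)) (by decide)
      · exact iff_of_false (fun h => (Ne.symm n02) (huniq C2 hC2 C0 hC0 5 h m5')) (by decide)
      · exact iff_of_true m6' (by decide)
      · exact iff_of_false (fun h => (nC2B) (huniq C2 hC2 B hB 7 h h7B)) (by decide)
      · exact iff_of_false (fun h => (Ne.symm n02) (huniq C2 hC2 C0 hC0 8 h m8')) (by decide)
      · exact iff_of_false (fun h => (n23) (huniq C2 hC2 C3 hC3 9 h m9')) (by decide)
      · exact iff_of_false (fun h => (nC2B) (huniq C2 hC2 B hB 10 h h10B)) (by decide)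
      · exact iff_of_true m11' (by decide)
    have e3 : C3 = ({3,9} : Finset (Fin 12)) := by
      ext x
      fin_cases x
      · exact iff_of_false (fun h => (Ne.symm n03) (huniq C3 hC3 C0 hC0 0 h m0)) (by decide)
      · exact iff_of_false (fun h => (nC3B) (huniq C3 hC3 B hB 1 h h1B)) (by decide)
      · exact iff_of_false (fun h => (Ne.symm n23) (huniq C3 hC3 C2 hC2 2 h m2)) (by decide)
      · exact iff_of_true m3 (by decide)
      · exact iff_of_false (fun h => (nC3B) (huniq C3 hC3 B hB 4 h h4B)) (by decide)
      · exact iff_of_false (fun h => (Ne.symm n03) (huniq C3 hC3 C0 hC0 5 h m5')) (by decide)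
      · exact iff_of_false (fun h => (Ne.symm n23) (huniq C3 hC3 C2 hC2 6 h m6')) (by decide)
      · exact iff_of_false (fun h => (nC3B) (huniq C3 hC3 B hB 7 h h7B)) (by decide)
      · exact iff_of_false (fun h => (Ne.symm n03) (huniq C3 hC3 C0 hC0 8 h m8')) (by decide)
      · exact iff_of_true m9' (by decide)
      · exact iff_of_false (fun h => (nC3B) (huniq C3 hC3 B hB 10 h h10B)) (by decide)
      · exact iff_of_false (fun h => (Ne.symm n23) (huniq C3 hC3 C2 hC2 11 h m11')) (by decide)
    left
    rw [hPeq, hBeq, e0, e2, e3]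
  · have m5' : (5 : Fin 12) ∈ C2 := h5 ▸ m5
    have nD6B : D6 ≠ B := fun h => hxnB 6 (by decide) (h ▸ m6)
    have nD6C2 : D6 ≠ C2 := fun h =>
      absurd (r2 5 (by decide) 6 (by decide) C2 hC2 m5' (h ▸ m6)) (by decide)
    have nD6C3 : D6 ≠ C3 := fun h =>
      absurd (r2 3 (by decide) 6 (by decide) C3 hC3 m3 (h ▸ m6)) (by decide)
    have hD6 : D6 = C0 := by
      rcases hmem4 D6 hD6 with h | h | h | h
      · exact absurd h nD6B
      · exact h
      · exact absurd h nD6C2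
      · exact absurd h nD6C3
    have m6' : (6 : Fin 12) ∈ C0 := hD6 ▸ m6
    have nD8B : D8 ≠ B := fun h => hxnB 8 (by decide) (h ▸ m8)
    have nD8C0 : D8 ≠ C0 := fun h =>
      absurd (r3 6 (by decide) 8 (by decide) C0 hC0 m6' (h ▸ m8)) (by decide)
    have hD8cases : D8 = C2 ∨ D8 = C3 := by
      rcases hmem4 D8 hD8 with h | h | h | h
      · exact absurd h nD8B
      · exact absurd h nD8C0
      · exact Or.inl h
      · exact Or.inr h
    rcases hD8cases with h8 | h8
    · have m8' : (8 : Fin 12) ∈ C2 := h8 ▸ m8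
      have nD9B : D9 ≠ B := fun h => hxnB 9 (by decide) (h ▸ m9)
      have nD9C0 : D9 ≠ C0 := fun h =>
        absurd (r4 0 (by decide) 9 (by decide) C0 hC0 m0 (h ▸ m9)) (by decide)
      have nD9C2 : D9 ≠ C2 := fun h =>
        absurd (r3 8 (by decide) 9 (by decide) C2 hC2 m8' (h ▸ m9)) (by decide)
      have hD9 : D9 = C3 := by
        rcases hmem4 D9 hD9 with h | h | h | h
        · exact absurd h nD9B
        · exact absurd h nD9C0
        · exact absurd h nD9C2
        · exact h
      have m9' : (9 : Fin 12) ∈ C3 := hD9 ▸ m9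
      have nD11B : D11 ≠ B := fun h => hxnB 11 (by decide) (h ▸ m11)
      have nD11C0 : D11 ≠ C0 := fun h =>
        absurd (r4 0 (by decide) 11 (by decide) C0 hC0 m0 (h ▸ m11)) (by decide)
      have nD11C3 : D11 ≠ C3 := fun h =>
        absurd (r4 9 (by decide) 11 (by decide) C3 hC3 m9' (h ▸ m11)) (by decide)
      have hD11 : D11 = C2 := by
        rcases hmem4 D11 hD11 with h | h | h | h
        · exact absurd h nD11B
        · exact absurd h nD11C0
        · exact h
        · exact absurd h nD11C3
      have m11' : (11 : Fin 12) ∈ C2 := hD11 ▸ m11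
      have e0 : C0 = ({0,6} : Finset (Fin 12)) := by
        ext x
        fin_cases x
        · exact iff_of_true m0 (by decide)
        · exact iff_of_false (fun h => (nC0B) (huniq C0 hC0 B hB 1 h h1B)) (by decide)
        · exact iff_of_false (fun h => (n02) (huniq C0 hC0 C2 hC2 2 h m2)) (by decide)
        · exact iff_of_false (fun h => (n03) (huniq C0 hC0 C3 hC3 3 h m3)) (by decide)
        · exact iff_of_false (fun h => (nC0B) (huniq C0 hC0 B hB 4 h h4B)) (by decide)
        · exact iff_of_false (fun h => (n02) (huniq C0 hC0 C2 hC2 5 h m5')) (by decide)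
        · exact iff_of_true m6' (by decide)
        · exact iff_of_false (fun h => (nC0B) (huniq C0 hC0 B hB 7 h h7B)) (by decide)
        · exact iff_of_false (fun h => (n02) (huniq C0 hC0 C2 hC2 8 h m8')) (by decide)
        · exact iff_of_false (fun h => (n03) (huniq C0 hC0 C3 hC3 9 h m9')) (by decide)
        · exact iff_of_false (fun h => (nC0B) (huniq C0 hC0 B hB 10 h h10B)) (by decide)
        · exact iff_of_false (fun h => (n02) (huniq C0 hC0 C2 hC2 11 h m11')) (by decide)
      have e2 : C2 = ({2,5,8,11} : Finset (Fin 12)) := by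
        ext x
        fin_cases x
        · exact iff_of_false (fun h => (Ne.symm n02) (huniq C2 hC2 C0 hC0 0 h m0)) (by decide)
        · exact iff_of_false (fun h => (nC2B) (huniq C2 hC2 B hB 1 h h1B)) (by decide)
        · exact iff_of_true m2 (by decide)
        · exact iff_of_false (fun h => (n23) (huniq C2 hC2 C3 hC3 3 h m3)) (by decide)
        · exact iff_of_false (fun h => (nC2B) (huniq C2 hC2 B hB 4 h h4B)) (by decide)
        · exact iff_of_true m5' (by decide)
        · exact iff_of_false (fun h => (Ne.symm n02) (huniq C2 hC2 C0 hC0 6 h m6')) (by decide)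
        · exact iff_of_false (fun h => (nC2B) (huniq C2 hC2 B hB 7 h h7B)) (by decide)
        · exact iff_of_true m8' (by decide)
        · exact iff_of_false (fun h => (n23) (huniq C2 hC2 C3 hC3 9 h m9')) (by decide)
        · exact iff_of_false (fun h => (nC2B) (huniq C2 hC2 B hB 10 h h10B)) (by decide)
        · exact iff_of_true m11' (by decide)
      have e3 : C3 = ({3,9} : Finset (Fin 12)) := by
        ext x
        fin_cases x
        · exact iff_of_false (fun h => (Ne.symm n03) (huniq C3 hC3 C0 hC0 0 h m0)) (by decide)
        · exact iff_of_false (fun h => (nC3B) (huniq C3 hC3 B hB 1 h h1B)) (by decide)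
        · exact iff_of_false (fun h => (Ne.symm n23) (huniq C3 hC3 C2 hC2 2 h m2)) (by decide)
        · exact iff_of_true m3 (by decide)
        · exact iff_of_false (fun h => (nC3B) (huniq C3 hC3 B hB 4 h h4B)) (by decide)
        · exact iff_of_false (fun h => (Ne.symm n23) (huniq C3 hC3 C2 hC2 5 h m5')) (by decide)
        · exact iff_of_false (fun h => (Ne.symm n03) (huniq C3 hC3 C0 hC0 6 h m6')) (by decide)
        · exact iff_of_false (fun h => (nC3B) (huniq C3 hC3 B hB 7 h h7B)) (by decide)
        · exact iff_of_false (fun h => (Ne.symm n23) (huniq C3 hC3 C2 hC2 8 h m8')) (by decide)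
        · exact iff_of_true m9' (by decide)
        · exact iff_of_false (fun h => (nC3B) (huniq C3 hC3 B hB 10 h h10B)) (by decide)
        · exact iff_of_false (fun h => (Ne.symm n23) (huniq C3 hC3 C2 hC2 11 h m11')) (by decide)
      right; right
      rw [hPeq, hBeq, e0, e2, e3]
    · have m8' : (8 : Fin 12) ∈ C3 := h8 ▸ m8
      have nD9B : D9 ≠ B := fun h => hxnB 9 (by decide) (h ▸ m9)
      have nD9C0 : D9 ≠ C0 := fun h =>
        absurd (r4 0 (by decide) 9 (by decide) C0 hC0 m0 (h ▸ m9)) (by decide)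
      have nD9C3 : D9 ≠ C3 := fun h =>
        absurd (r3 8 (by decide) 9 (by decide) C3 hC3 m8' (h ▸ m9)) (by decide)
      have hD9 : D9 = C2 := by
        rcases hmem4 D9 hD9 with h | h | h | h
        · exact absurd h nD9B
        · exact absurd h nD9C0
        · exact h
        · exact absurd h nD9C3
      have m9' : (9 : Fin 12) ∈ C2 := hD9 ▸ m9
      have nD11B : D11 ≠ B := fun h => hxnB 11 (by decide) (h ▸ m11)
      have nD11C0 : D11 ≠ C0 := fun h =>
        absurd (r4 0 (by decide) 11 (by decide) C0 hC0 m0 (h ▸ m11)) (by decide)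
      have nD11C2 : D11 ≠ C2 := fun h =>
        absurd (r4 9 (by decide) 11 (by decide) C2 hC2 m9' (h ▸ m11)) (by decide)
      have hD11 : D11 = C3 := by
        rcases hmem4 D11 hD11 with h | h | h | h
        · exact absurd h nD11B
        · exact absurd h nD11C0
        · exact absurd h nD11C2
        · exact h
      have m11' : (11 : Fin 12) ∈ C3 := hD11 ▸ m11
      have e0 : C0 = ({0,6} : Finset (Fin 12)) := by
        ext x
        fin_cases x
        · exact iff_of_true m0 (by decide)
        · exact iff_of_false (fun h => (nC0B) (huniq C0 hC0 B hB 1 h h1B)) (by decide)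
        · exact iff_of_false (fun h => (n02) (huniq C0 hC0 C2 hC2 2 h m2)) (by decide)
        · exact iff_of_false (fun h => (n03) (huniq C0 hC0 C3 hC3 3 h m3)) (by decide)
        · exact iff_of_false (fun h => (nC0B) (huniq C0 hC0 B hB 4 h h4B)) (by decide)
        · exact iff_of_false (fun h => (n02) (huniq C0 hC0 C2 hC2 5 h m5')) (by decide)
        · exact iff_of_true m6' (by decide)
        · exact iff_of_false (fun h => (nC0B) (huniq C0 hC0 B hB 7 h h7B)) (by decide)
        · exact iff_of_false (fun h => (n03) (huniq C0 hC0 C3 hC3 8 h m8')) (by decide)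
        · exact iff_of_false (fun h => (n02) (huniq C0 hC0 C2 hC2 9 h m9')) (by decide)
        · exact iff_of_false (fun h => (nC0B) (huniq C0 hC0 B hB 10 h h10B)) (by decide)
        · exact iff_of_false (fun h => (n03) (huniq C0 hC0 C3 hC3 11 h m11')) (by decide)
      have e2 : C2 = ({2,5,9} : Finset (Fin 12)) := by
        ext x
        fin_cases x
        · exact iff_of_false (fun h => (Ne.symm n02) (huniq C2 hC2 C0 hC0 0 h m0)) (by decide)
        · exact iff_of_false (fun h => (nC2B) (huniq C2 hC2 B hB 1 h h1B)) (by decide)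
        · exact iff_of_true m2 (by decide)
        · exact iff_of_false (fun h => (n23) (huniq C2 hC2 C3 hC3 3 h m3)) (by decide)
        · exact iff_of_false (fun h => (nC2B) (huniq C2 hC2 B hB 4 h h4B)) (by decide)
        · exact iff_of_true m5' (by decide)
        · exact iff_of_false (fun h => (Ne.symm n02) (huniq C2 hC2 C0 hC0 6 h m6')) (by decide)
        · exact iff_of_false (fun h => (nC2B) (huniq C2 hC2 B hB 7 h h7B)) (by decide)
        · exact iff_of_false (fun h => (n23) (huniq C2 hC2 C3 hC3 8 h m8')) (by decide)
        · exact iff_of_true m9' (by decide)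
        · exact iff_of_false (fun h => (nC2B) (huniq C2 hC2 B hB 10 h h10B)) (by decide)
        · exact iff_of_false (fun h => (n23) (huniq C2 hC2 C3 hC3 11 h m11')) (by decide)
      have e3 : C3 = ({3,8,11} : Finset (Fin 12)) := by
        ext x
        fin_cases x
        · exact iff_of_false (fun h => (Ne.symm n03) (huniq C3 hC3 C0 hC0 0 h m0)) (by decide)
        · exact iff_of_false (fun h => (nC3B) (huniq C3 hC3 B hB 1 h h1B)) (by decide)
        · exact iff_of_false (fun h => (Ne.symm n23) (huniq C3 hC3 C2 hC2 2 h m2)) (by decide)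
        · exact iff_of_true m3 (by decide)
        · exact iff_of_false (fun h => (nC3B) (huniq C3 hC3 B hB 4 h h4B)) (by decide)
        · exact iff_of_false (fun h => (Ne.symm n23) (huniq C3 hC3 C2 hC2 5 h m5')) (by decide)
        · exact iff_of_false (fun h => (Ne.symm n03) (huniq C3 hC3 C0 hC0 6 h m6')) (by decide)
        · exact iff_of_false (fun h => (nC3B) (huniq C3 hC3 B hB 7 h h7B)) (by decide)
        · exact iff_of_true m8' (by decide)
        · exact iff_of_false (fun h => (Ne.symm n23) (huniq C3 hC3 C2 hC2 9 h m9')) (by decide)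
        · exact iff_of_false (fun h => (nC3B) (huniq C3 hC3 B hB 10 h h10B)) (by decide)
        · exact iff_of_true m11' (by decide)
      right; left
      rw [hPeq, hBeq, e0, e2, e3]
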